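/- Let (Ω, 𝒜, ℙ) be a probability space, m ≥ 1, X = (X_1,…,X_m) an m-tuple of stochastic processes with right-continuous paths having left limits, ρ a map from delayed and stopped versions of X to real random variables, 𝒯 a set of delays containing a refining sequence (τ^n)_{n∈ℕ} of phased delays increasing to identity, and 𝒳 = {X⋄τ : τ ∈ 𝒯} ∪ {X}. Let Π and Π̃ be two increasing sequences of unbounded partitions of [0,∞) with mesh tending to 0, and let σ be a permutation of {1,…,m}. Suppose the ISU decomposition scheme δ^{ISU} with respect to Π (with natural update order) and the ISU decomposition scheme δ̃^{ISU} with respect to Π̃ with update order σ both exist on 𝒳 (with values that are right-continuous with left limits and start at 0) and are both stable at X along (τ^n). Then almost surely δ^{ISU}_i(X)(t) = δ̃^{ISU}_i(X)(t) for all i and all t ≥ 0. -/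

import Mathlib

open Filter Topology Set MeasureTheory

/-- A path is càdlàg on `[0,∞)`: right-continuous at every `t ≥ 0` and with left limits at
every `t > 0`. -/
def CadlagOn (f : ℝ → ℝ) : Prop :=
  (∀ t, 0 ≤ t → ContinuousWithinAt f (Ici t) t) ∧
  (∀ t, 0 < t → ∃ L, Tendsto f (𝓝[<] t) (𝓝 L))

/-- A delay: each component is `[0,∞)`-valued, nondecreasing, right-continuous and bounded
above by the identity on `[0,∞)`. -/
def IsDelay {m : ℕ} (τ : Fin m → ℝ → ℝ) : Prop :=
  ∀ i, (∀ s, 0 ≤ s → 0 ≤ τ i s) ∧ (∀ s u, 0 ≤ s → s ≤ u → τ i s ≤ τ i u) ∧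
    (∀ s, 0 ≤ s → ContinuousWithinAt (τ i) (Ici s) s) ∧ (∀ s, 0 ≤ s → τ i s ≤ s)

/-- A delay is phased if there is an unbounded partition of `[0,∞)` such that on each
partition interval at most one of its components is non-constant. -/
def IsPhasedDelay {m : ℕ} (τ : Fin m → ℝ → ℝ) : Prop :=
  ∃ u : ℕ → ℝ, u 0 = 0 ∧ StrictMono u ∧ Tendsto u atTop atTop ∧
    ∀ l, ∃ i₀ : Fin m, ∀ j ≠ i₀,
      ∀ x ∈ Ioc (u l) (u (l + 1)), ∀ y ∈ Ioc (u l) (u (l + 1)), τ j x = τ j y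

/-- A refining sequence of delays that increases to identity. -/
def IsRefiningToIdentity {m : ℕ} (τ : ℕ → Fin m → ℝ → ℝ) : Prop :=
  ∀ (i : Fin m) (t : ℝ), 0 ≤ t →
    (∀ n, τ n i '' Icc 0 t ⊆ τ (n + 1) i '' Icc 0 t) ∧
    closure (⋃ n, τ n i '' Icc 0 t) = Icc 0 t

/-- The delayed process tuple `X ⋄ τ = (X_1 ∘ τ_1, …, X_m ∘ τ_m)`. -/
def delayed {Ω : Type*} {m : ℕ} (X : Fin m → Ω → ℝ → ℝ) (τ : Fin m → ℝ → ℝ) :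
    Fin m → Ω → ℝ → ℝ :=
  fun i ω u => X i ω (τ i u)

/-- The componentwise stopped tuple of processes `Y^{(t_1,…,t_m)}`. -/
noncomputable def stopProc {Ω : Type*} {m : ℕ} (Y : Fin m → Ω → ℝ → ℝ) (tv : Fin m → ℝ) :
    Fin m → Ω → ℝ → ℝ :=
  fun i ω u => if u ≤ tv i then Y i ω u else Y i ω (tv i)

/-- A decomposition scheme `δ` on a family `𝒳` of process tuples is good if, for every
`Y ∈ 𝒳`, the decomposition `δ Y` starts at `0`, has càdlàg paths, is additive and is
normalized. -/
def IsGoodScheme {Ω : Type*} [MeasurableSpace Ω] (μ : Measure Ω) {m : ℕ}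
    (ρ : (Fin m → Ω → ℝ → ℝ) → Ω → ℝ) (𝒳 : Set (Fin m → Ω → ℝ → ℝ))
    (δ : (Fin m → Ω → ℝ → ℝ) → Fin m → ℝ → Ω → ℝ) : Prop :=
  ∀ Y ∈ 𝒳,
    (∀ (i : Fin m) ω, δ Y i 0 ω = 0) ∧
    (∀ (i : Fin m) ω, CadlagOn (fun t => δ Y i t ω)) ∧
    (∀ t, 0 ≤ t → ∀ᵐ ω ∂μ,
      ρ (stopProc Y fun _ => t) ω - ρ (stopProc Y fun _ => 0) ω =
        ∑ i : Fin m, δ Y i t ω) ∧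
    (∀ (i : Fin m) (a b : ℝ), 0 ≤ a → a < b →
      (∀ ω, ∀ x ∈ Ioc a b, ∀ y ∈ Ioc a b, Y i ω x = Y i ω y) →
      ∀ᵐ ω ∂μ, ∀ x ∈ Ioc a b, ∀ y ∈ Ioc a b, δ Y i x ω = δ Y i y ω)

/-- A decomposition scheme `δ` is stable at `X` along the delay sequence `τ`: the left
limits of `δ (X ⋄ τ n)` converge in probability to the left limits of `δ X`. -/
def StableAt {Ω : Type*} [MeasurableSpace Ω] (μ : Measure Ω) {m : ℕ}
    (X : Fin m → Ω → ℝ → ℝ) (τ : ℕ → Fin m → ℝ → ℝ)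
    (δ : (Fin m → Ω → ℝ → ℝ) → Fin m → ℝ → Ω → ℝ) : Prop :=
  ∀ (i : Fin m) (t : ℝ), 0 < t →
    TendstoInMeasure μ
      (fun n ω => Function.leftLim (fun s => δ (delayed X (τ n)) i s ω) t) atTop
      (fun ω => Function.leftLim (fun s => δ X i s ω) t)


/-- The sequentially-updated time vector for update order `σ`: on the step from `s_l` to
`s_{l+1}`, when component `i` is being updated, coordinate `j` equals `s_{l+1} ∧ t` if `j`
comes at or before `i` in the order `σ`, and `s_l ∧ t` otherwise. -/
def suVperm {m : ℕ} (σ : Equiv.Perm (Fin m)) (s : ℕ → ℝ) (l : ℕ) (i : Fin m) (t : ℝ) :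
    Fin m → ℝ :=
  fun j => if σ.symm j ≤ σ.symm i then min (s (l + 1)) t else min (s l) t

/-- As `suVperm`, but component `i` itself is still at `s_l ∧ t`. -/
def suWperm {m : ℕ} (σ : Equiv.Perm (Fin m)) (s : ℕ → ℝ) (l : ℕ) (i : Fin m) (t : ℝ) :
    Fin m → ℝ :=
  fun j => if σ.symm j < σ.symm i then min (s (l + 1)) t else min (s l) t


/-! ### Auxiliary lemmas for the invariance proof -/

section InvarianceAux

open Function

/-- Uniqueness (up to a.e. equality) of limits in measure. -/
lemma tendstoInMeasure_unique' {Ω : Type*} [MeasurableSpace Ω] {μ : MeasureTheory.Measure Ω}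
    {f : ℕ → Ω → ℝ} {g h : Ω → ℝ}
    (hg : TendstoInMeasure μ f atTop g) (hh : TendstoInMeasure μ f atTop h) :
    g =ᵐ[μ] h := by
  have key : ∀ ε : ℝ, 0 < ε → μ {x | ε ≤ dist (g x) (h x)} = 0 := by
    intro ε hε
    have hε2 : 0 < ε / 2 := by linarith
    have hsub : ∀ n : ℕ, {x | ε ≤ dist (g x) (h x)} ⊆
        {x | ε / 2 ≤ dist (f n x) (g x)} ∪ {x | ε / 2 ≤ dist (f n x) (h x)} := by
      intro n x hx
      simp only [Set.mem_setOf_eq] at hx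
      by_contra hcon
      simp only [Set.mem_union, Set.mem_setOf_eq, not_or, not_le] at hcon
      have hd : dist (g x) (h x) ≤ dist (f n x) (g x) + dist (f n x) (h x) :=
        dist_triangle_left _ _ _
      linarith [hcon.1, hcon.2]
    have hle : ∀ n : ℕ, μ {x | ε ≤ dist (g x) (h x)} ≤
        μ {x | ε / 2 ≤ dist (f n x) (g x)} + μ {x | ε / 2 ≤ dist (f n x) (h x)} := fun n =>
      (measure_mono (hsub n)).trans (measure_union_le _ _)
    have hlim : Tendsto (fun n => μ {x | ε / 2 ≤ dist (f n x) (g x)} +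
        μ {x | ε / 2 ≤ dist (f n x) (h x)}) atTop (𝓝 0) := by
      simpa using (tendstoInMeasure_iff_dist.1 hg (ε / 2) hε2).add (tendstoInMeasure_iff_dist.1 hh (ε / 2) hε2)
    have := ge_of_tendsto' hlim hle
    exact le_antisymm this zero_le
  have hsubset : {x | g x ≠ h x} ⊆ ⋃ n : ℕ, {x | (1 : ℝ) / (n + 1) ≤ dist (g x) (h x)} := by
    intro x hx
    have hd : 0 < dist (g x) (h x) := dist_pos.2 hx
    obtain ⟨n, hn⟩ := exists_nat_one_div_lt hd
    exact Set.mem_iUnion.2 ⟨n, hn.le⟩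
  have h0 : μ (⋃ n : ℕ, {x | (1 : ℝ) / (n + 1) ≤ dist (g x) (h x)}) = 0 :=
    MeasureTheory.measure_iUnion_null fun n => key _ (by positivity)
  exact MeasureTheory.ae_iff.2 (MeasureTheory.measure_mono_null hsubset h0)

/-- A sequence which is eventually equal to `g` tends to `g` in measure. -/
lemma tendstoInMeasure_of_eventually_eq {Ω : Type*} [MeasurableSpace Ω]
    {μ : MeasureTheory.Measure Ω} {f : ℕ → Ω → ℝ} {g : Ω → ℝ}
    (h : ∀ᶠ n in atTop, f n = g) : TendstoInMeasure μ f atTop g := by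
  rw [tendstoInMeasure_iff_dist]
  intro ε hε
  refine Tendsto.congr' ?_ tendsto_const_nhds
  filter_upwards [h] with n hn
  have : {ω | ε ≤ dist (f n ω) (g ω)} = ∅ := by
    ext ω
    simp only [Set.mem_setOf_eq, Set.mem_empty_iff_false, iff_false, not_le, hn, dist_self]
    exact hε
  rw [this, MeasureTheory.measure_empty]

/-- Difference of two sequences converging in measure converges in measure. -/
lemma tendstoInMeasure_sub' {Ω : Type*} [MeasurableSpace Ω] {μ : MeasureTheory.Measure Ω}
    {f f' : ℕ → Ω → ℝ} {g g' : Ω → ℝ}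
    (h : TendstoInMeasure μ f atTop g) (h' : TendstoInMeasure μ f' atTop g') :
    TendstoInMeasure μ (fun n ω => f n ω - f' n ω) atTop (fun ω => g ω - g' ω) := by
  rw [tendstoInMeasure_iff_dist]
  intro ε hε
  have hε2 : 0 < ε / 2 := by linarith
  have hsub : ∀ n : ℕ, {ω | ε ≤ dist (f n ω - f' n ω) (g ω - g' ω)} ⊆
      {ω | ε / 2 ≤ dist (f n ω) (g ω)} ∪ {ω | ε / 2 ≤ dist (f' n ω) (g' ω)} := by
    intro n ω hω
    simp only [Set.mem_setOf_eq] at hω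
    by_contra hcon
    simp only [Set.mem_union, Set.mem_setOf_eq, not_or, not_le] at hcon
    have hd : dist (f n ω - f' n ω) (g ω - g' ω) ≤
        dist (f n ω) (g ω) + dist (f' n ω) (g' ω) := by
      simp only [Real.dist_eq]
      calc |f n ω - f' n ω - (g ω - g' ω)| = |(f n ω - g ω) + -(f' n ω - g' ω)| := by ring_nf
        _ ≤ |f n ω - g ω| + |-(f' n ω - g' ω)| := abs_add_le _ _
        _ = |f n ω - g ω| + |f' n ω - g' ω| := by rw [abs_neg]
    linarith [hcon.1, hcon.2]
  have hle : ∀ n : ℕ, μ {ω | ε ≤ dist (f n ω - f' n ω) (g ω - g' ω)} ≤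
      μ {ω | ε / 2 ≤ dist (f n ω) (g ω)} + μ {ω | ε / 2 ≤ dist (f' n ω) (g' ω)} := fun n =>
    (measure_mono (hsub n)).trans (measure_union_le _ _)
  have hlim : Tendsto (fun n => μ {ω | ε / 2 ≤ dist (f n ω) (g ω)} +
      μ {ω | ε / 2 ≤ dist (f' n ω) (g' ω)}) atTop (𝓝 0) := by
    simpa using (tendstoInMeasure_iff_dist.1 h (ε / 2) hε2).add (tendstoInMeasure_iff_dist.1 h' (ε / 2) hε2)
  exact tendsto_of_tendsto_of_tendsto_of_le_of_le tendsto_const_nhds hlim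
    (fun n => zero_le) hle

/-- Stopping a path at two different times within an interval of constancy gives the same
stopped path. -/
lemma stop_ite_congr_le {Ω : Type*} {m : ℕ} (Y : Fin m → Ω → ℝ → ℝ) {j : Fin m} {A B x y : ℝ}
    (hc : ∀ ω, ∀ p ∈ Icc A B, ∀ q ∈ Icc A B, Y j ω p = Y j ω q)
    (hx : x ∈ Icc A B) (hy : y ∈ Icc A B) (hxy : x ≤ y) (ω : Ω) (v : ℝ) :
    (if v ≤ x then Y j ω v else Y j ω x) = (if v ≤ y then Y j ω v else Y j ω y) := by
  by_cases h1 : v ≤ x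
  · rw [if_pos h1, if_pos (h1.trans hxy)]
  · rw [if_neg h1]
    push_neg at h1
    by_cases h2 : v ≤ y
    · rw [if_pos h2]
      exact hc ω x hx v ⟨hx.1.trans h1.le, h2.trans hy.2⟩
    · rw [if_neg h2]
      exact hc ω x hx y hy

lemma stop_ite_congr {Ω : Type*} {m : ℕ} (Y : Fin m → Ω → ℝ → ℝ) {j : Fin m} {A B x y : ℝ}
    (hc : ∀ ω, ∀ p ∈ Icc A B, ∀ q ∈ Icc A B, Y j ω p = Y j ω q)
    (hx : x ∈ Icc A B) (hy : y ∈ Icc A B) (ω : Ω) (v : ℝ) :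
    (if v ≤ x then Y j ω v else Y j ω x) = (if v ≤ y then Y j ω v else Y j ω y) := by
  rcases le_total x y with h | h
  · exact stop_ite_congr_le Y hc hx hy h ω v
  · exact (stop_ite_congr_le Y hc hy hx h ω v).symm

lemma stopProc_congr' {Ω : Type*} {m : ℕ} (Y : Fin m → Ω → ℝ → ℝ) {tv tv' : Fin m → ℝ}
    (A B : ℝ)
    (h : ∀ j, tv j = tv' j ∨ (tv j ∈ Icc A B ∧ tv' j ∈ Icc A B ∧
      ∀ ω, ∀ p ∈ Icc A B, ∀ q ∈ Icc A B, Y j ω p = Y j ω q)) :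
    stopProc Y tv = stopProc Y tv' := by
  funext j ω v
  show (if v ≤ tv j then Y j ω v else Y j ω (tv j))
      = (if v ≤ tv' j then Y j ω v else Y j ω (tv' j))
  rcases h j with he | ⟨h1, h2, hcc⟩
  · rw [he]
  · exact stop_ite_congr Y hcc h1 h2 ω v

end InvarianceAux


section InvarianceCore

open Function

/-- The key one-step computation for SU sums of a process which is, except possibly in
coordinate `c`, constant on the phase interval `[uK, uK1]`. -/
lemma su_step {Ω : Type*} {m : ℕ} (Y : Fin m → Ω → ℝ → ℝ)
    (ρ : (Fin m → Ω → ℝ → ℝ) → Ω → ℝ) (sg : Equiv.Perm (Fin m)) (c i : Fin m)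
    {uK uK1 t'' t a b : ℝ}
    (hconst : ∀ j, j ≠ c → ∀ ω, ∀ p ∈ Icc uK uK1, ∀ q ∈ Icc uK uK1, Y j ω p = Y j ω q)
    (h1 : uK < t'') (h2 : t'' ≤ t) (h3 : t ≤ uK1)
    (hab : a < b) (hm : b - a < t'' - uK) (ω : Ω) :
    (ρ (stopProc Y (fun j => if sg.symm j ≤ sg.symm i then min b t else min a t)) ω
        - ρ (stopProc Y (fun j => if sg.symm j < sg.symm i then min b t else min a t)) ω)
      - (ρ (stopProc Y (fun j => if sg.symm j ≤ sg.symm i then min b t'' else min a t'')) ω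
        - ρ (stopProc Y (fun j => if sg.symm j < sg.symm i then min b t'' else min a t'')) ω)
    = (if i = c then
          ρ (stopProc Y (fun j => if j = c then max (min b t) t'' else uK)) ω else 0)
      - (if i = c then
          ρ (stopProc Y (fun j => if j = c then max (min a t) t'' else uK)) ω else 0) := by
  have huK1 : uK ≤ uK1 := le_trans h1.le (h2.trans h3)
  by_cases hbt'' : b ≤ t''
  · have e1 : min b t = min b t'' := by rw [min_eq_left (hbt''.trans h2), min_eq_left hbt'']
    have e2 : min a t = min a t'' := by
      rw [min_eq_left ((hab.le.trans hbt'').trans h2), min_eq_left (hab.le.trans hbt'')]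
    have e4 : max (min b t'') t'' = t'' := max_eq_right (min_le_right _ _)
    have e5 : max (min a t'') t'' = t'' := max_eq_right (min_le_right _ _)
    simp only [e1, e2, e4, e5]
    ring
  · push_neg at hbt''
    by_cases hat : t ≤ a
    · have e1 : min b t = min a t := by rw [min_eq_right (hat.trans hab.le), min_eq_right hat]
      have e2 : min b t'' = min a t'' := by
        rw [min_eq_right ((h2.trans hat).trans hab.le), min_eq_right (h2.trans hat)]
      simp only [e1, e2, ite_self]
      ring
    · push_neg at hat
      have haK : uK < a := by linarith
      have hbtK : min b t ∈ Icc uK uK1 :=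
        ⟨h1.le.trans (le_min hbt''.le h2), (min_le_right b t).trans h3⟩
      have haT : min a t = a := min_eq_left hat.le
      have haM : a ∈ Icc uK uK1 := ⟨haK.le, hat.le.trans h3⟩
      have hbt''M : min b t'' = t'' := min_eq_right hbt''.le
      have ht''M : t'' ∈ Icc uK uK1 := ⟨h1.le, h2.trans h3⟩
      have hat''M : min a t'' ∈ Icc uK uK1 :=
        ⟨le_min haK.le h1.le, (min_le_left a t'').trans haM.2⟩
      by_cases hic : i = c
      · subst hic
        have red : ∀ (tv : Fin m → ℝ) (x : ℝ), tv i = x →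
            (∀ j, j ≠ i → tv j ∈ Icc uK uK1) →
            stopProc Y tv = stopProc Y (fun j => if j = i then x else uK) := by
          intro tv x hx htv
          refine stopProc_congr' Y uK uK1 (fun j => ?_)
          by_cases hj : j = i
          · left
            subst hj
            simpa using hx
          · right
            refine ⟨htv j hj, ?_, hconst j hj⟩
            simp only [if_neg hj]
            exact ⟨le_rfl, huK1⟩
        have rV : stopProc Y (fun j => if sg.symm j ≤ sg.symm i then min b t else min a t)
            = stopProc Y (fun j => if j = i then min b t else uK) := by
          refine red _ _ (by simp) (fun j hj => ?_)
          by_cases hcnd : sg.symm j ≤ sg.symm i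
          · rw [if_pos hcnd]; exact hbtK
          · rw [if_neg hcnd, haT]; exact haM
        have rW : stopProc Y (fun j => if sg.symm j < sg.symm i then min b t else min a t)
            = stopProc Y (fun j => if j = i then a else uK) := by
          refine red _ _ (by simp [haT]) (fun j hj => ?_)
          by_cases hcnd : sg.symm j < sg.symm i
          · rw [if_pos hcnd]; exact hbtK
          · rw [if_neg hcnd, haT]; exact haM
        have rV'' : stopProc Y (fun j => if sg.symm j ≤ sg.symm i then min b t'' else min a t'')
            = stopProc Y (fun j => if j = i then t'' else uK) := by
          refine red _ _ (by simp [hbt''M]) (fun j hj => ?_)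
          by_cases hcnd : sg.symm j ≤ sg.symm i
          · rw [if_pos hcnd, hbt''M]; exact ht''M
          · rw [if_neg hcnd]; exact hat''M
        have rW'' : stopProc Y (fun j => if sg.symm j < sg.symm i then min b t'' else min a t'')
            = stopProc Y (fun j => if j = i then min a t'' else uK) := by
          refine red _ _ (by simp) (fun j hj => ?_)
          by_cases hcnd : sg.symm j < sg.symm i
          · rw [if_pos hcnd, hbt''M]; exact ht''M
          · rw [if_neg hcnd]; exact hat''M
        rw [rV, rW, rV'', rW'', if_pos rfl, if_pos rfl]
        have hφb : max (min b t) t'' = min b t := max_eq_left (le_min hbt''.le h2)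
        have hφa : max (min a t) t'' = max a t'' := by rw [haT]
        simp only [hφb, hφa]
        by_cases hat'' : t'' ≤ a
        · simp only [max_eq_left hat'', min_eq_right hat'']
          ring
        · push_neg at hat''
          simp only [max_eq_right hat''.le, min_eq_left hat''.le]
          ring
      · have key0 : ∀ r : ℝ, t'' ≤ r → r ≤ t →
            stopProc Y (fun j => if sg.symm j ≤ sg.symm i then min b r else min a r)
              = stopProc Y (fun j => if sg.symm j < sg.symm i then min b r else min a r) := by
          intro r hr1 hr2
          refine stopProc_congr' Y uK uK1 (fun j => ?_)
          by_cases hj : j = i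
          · right
            subst hj
            simp only [le_refl, if_true, lt_irrefl, if_false]
            exact ⟨⟨h1.le.trans (le_min hbt''.le hr1), (min_le_right b r).trans (hr2.trans h3)⟩,
              ⟨le_min haK.le (h1.le.trans hr1), (min_le_right a r).trans (hr2.trans h3)⟩,
              hconst j hic⟩
          · left
            have hne : sg.symm j ≠ sg.symm i := fun h => hj (sg.symm.injective h)
            by_cases hcnd : sg.symm j ≤ sg.symm i
            · rw [if_pos hcnd, if_pos (lt_of_le_of_ne hcnd hne)]
            · rw [if_neg hcnd, if_neg fun h => hcnd h.le]
        rw [key0 t h2 le_rfl, key0 t'' le_rfl h2]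
        simp only [if_neg hic]
        ring

/-- The exact value of the difference of two SU sums with time caps `t` and `t''` lying in
the same phase interval, for a sufficiently fine partition. -/
lemma su_sum_diff_eq {Ω : Type*} {m : ℕ} (Y : Fin m → Ω → ℝ → ℝ)
    (ρ : (Fin m → Ω → ℝ → ℝ) → Ω → ℝ) (sg : Equiv.Perm (Fin m)) (c : Fin m)
    {uK uK1 t'' t : ℝ}
    (hconst : ∀ j, j ≠ c → ∀ ω, ∀ p ∈ Icc uK uK1, ∀ q ∈ Icc uK uK1, Y j ω p = Y j ω q)
    (huK : 0 ≤ uK) (h1 : uK < t'') (h2 : t'' ≤ t) (h3 : t ≤ uK1)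
    (sp : ℕ → ℝ) (hsp0 : sp 0 = 0) (hspmono : StrictMono sp) (hsptop : Tendsto sp atTop atTop)
    (hmeshn : ∀ k, sp (k + 1) - sp k < t'' - uK) (i : Fin m) (ω : Ω) :
    (∑ᶠ l : ℕ, (ρ (stopProc Y (suVperm sg sp l i t)) ω
        - ρ (stopProc Y (suWperm sg sp l i t)) ω))
      - (∑ᶠ l : ℕ, (ρ (stopProc Y (suVperm sg sp l i t'')) ω
        - ρ (stopProc Y (suWperm sg sp l i t'')) ω))
    = (if i = c then
        ρ (stopProc Y (fun j => if j = c then t else uK)) ω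
          - ρ (stopProc Y (fun j => if j = c then t'' else uK)) ω
       else 0) := by
  have ht0 : 0 ≤ t := huK.trans (h1.le.trans h2)
  have ht''0 : 0 ≤ t'' := huK.trans h1.le
  obtain ⟨M, hM⟩ := (hsptop.eventually_ge_atTop t).exists
  set H : ℝ → ℝ := fun x => if i = c then
      ρ (stopProc Y (fun j => if j = c then max (min x t) t'' else uK)) ω else 0 with hH
  have ha0 : ∀ l : ℕ, 0 ≤ sp l := by
    intro l
    rw [← hsp0]
    exact hspmono.monotone (Nat.zero_le l)
  have hzero : ∀ r : ℝ, r ≤ t → ∀ l : ℕ, M ≤ l →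
      ρ (stopProc Y (suVperm sg sp l i r)) ω - ρ (stopProc Y (suWperm sg sp l i r)) ω = 0 := by
    intro r hr l hl
    have h₁ : r ≤ sp l := hr.trans (hM.trans (hspmono.monotone hl))
    have h₂ : r ≤ sp (l + 1) := h₁.trans (hspmono.monotone (Nat.le_succ l))
    have hVW : suVperm sg sp l i r = suWperm sg sp l i r := by
      funext j
      simp only [suVperm, suWperm, min_eq_right h₂, min_eq_right h₁, ite_self]
    rw [hVW, sub_self]
  have e1 : (∑ᶠ l : ℕ, (ρ (stopProc Y (suVperm sg sp l i t)) ω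
      - ρ (stopProc Y (suWperm sg sp l i t)) ω))
      = ∑ l ∈ Finset.range M, (ρ (stopProc Y (suVperm sg sp l i t)) ω
        - ρ (stopProc Y (suWperm sg sp l i t)) ω) := by
    refine finsum_eq_sum_of_support_subset _ ?_
    intro l hl
    simp only [Function.mem_support] at hl
    simp only [Finset.coe_range, Set.mem_Iio]
    by_contra hcon
    exact hl (hzero t le_rfl l (le_of_not_gt hcon))
  have e2 : (∑ᶠ l : ℕ, (ρ (stopProc Y (suVperm sg sp l i t'')) ω
      - ρ (stopProc Y (suWperm sg sp l i t'')) ω))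
      = ∑ l ∈ Finset.range M, (ρ (stopProc Y (suVperm sg sp l i t'')) ω
        - ρ (stopProc Y (suWperm sg sp l i t'')) ω) := by
    refine finsum_eq_sum_of_support_subset _ ?_
    intro l hl
    simp only [Function.mem_support] at hl
    simp only [Finset.coe_range, Set.mem_Iio]
    by_contra hcon
    exact hl (hzero t'' h2 l (le_of_not_gt hcon))
  have hstep : ∀ l ∈ Finset.range M,
      (ρ (stopProc Y (suVperm sg sp l i t)) ω - ρ (stopProc Y (suWperm sg sp l i t)) ω)
        - (ρ (stopProc Y (suVperm sg sp l i t'')) ω - ρ (stopProc Y (suWperm sg sp l i t'')) ω)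
      = H (sp (l + 1)) - H (sp l) := by
    intro l _
    have := su_step Y ρ sg c i hconst h1 h2 h3 (hspmono (show l < l + 1 by omega)) (hmeshn l) ω
    simp only [hH]
    exact this
  have tele : ∀ MM : ℕ, ∑ l ∈ Finset.range MM, (H (sp (l + 1)) - H (sp l))
      = H (sp MM) - H (sp 0) := by
    intro MM
    induction MM with
    | zero => simp
    | succ MM ih => rw [Finset.sum_range_succ, ih]; ring
  rw [e1, e2, ← Finset.sum_sub_distrib, Finset.sum_congr rfl hstep, tele M]
  have hφM : max (min (sp M) t) t'' = t := by rw [min_eq_right hM, max_eq_left h2]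
  have hφ0 : max (min (sp 0) t) t'' = t'' := by
    rw [hsp0, min_eq_left ht0, max_eq_right ht''0]
  simp only [hH, hφM, hφ0]
  by_cases hic : i = c
  · simp only [if_pos hic]
  · simp only [if_neg hic, sub_self]

/-- In-measure characterization of the increments of an ISU decomposition of a phased
process inside one phase interval. -/
lemma isu_increment_ae {Ω : Type*} [MeasurableSpace Ω] {μ : MeasureTheory.Measure Ω} {m : ℕ}
    (Y : Fin m → Ω → ℝ → ℝ) (ρ : (Fin m → Ω → ℝ → ℝ) → Ω → ℝ) (sg : Equiv.Perm (Fin m))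
    (sp : ℕ → ℕ → ℝ) (hsp0 : ∀ n, sp n 0 = 0) (hspmono : ∀ n, StrictMono (sp n))
    (hsptop : ∀ n, Tendsto (sp n) atTop atTop)
    (hmesh : ∀ ε > (0 : ℝ), ∃ N, ∀ n ≥ N, ∀ k, sp n (k + 1) - sp n k < ε)
    (δ : Fin m → ℝ → Ω → ℝ)
    (hlim : ∀ (i : Fin m) (t : ℝ), 0 ≤ t → TendstoInMeasure μ
      (fun n ω => ∑ᶠ l : ℕ, (ρ (stopProc Y (suVperm sg (sp n) l i t)) ω
        - ρ (stopProc Y (suWperm sg (sp n) l i t)) ω)) atTop (δ i t))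
    (c : Fin m) {uK uK1 t'' t : ℝ}
    (hconst : ∀ j, j ≠ c → ∀ ω, ∀ p ∈ Icc uK uK1, ∀ q ∈ Icc uK uK1, Y j ω p = Y j ω q)
    (huK : 0 ≤ uK) (h1 : uK < t'') (h2 : t'' ≤ t) (h3 : t ≤ uK1) (i : Fin m) :
    (fun ω => δ i t ω - δ i t'' ω) =ᵐ[μ]
      (fun ω => if i = c then
          ρ (stopProc Y (fun j => if j = c then t else uK)) ω
            - ρ (stopProc Y (fun j => if j = c then t'' else uK)) ω
        else 0) := by
  have ht0 : 0 ≤ t := huK.trans (h1.le.trans h2)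
  have ht''0 : 0 ≤ t'' := huK.trans h1.le
  have hA := tendstoInMeasure_sub' (hlim i t ht0) (hlim i t'' ht''0)
  have hB : TendstoInMeasure μ
      (fun n ω => (∑ᶠ l : ℕ, (ρ (stopProc Y (suVperm sg (sp n) l i t)) ω
          - ρ (stopProc Y (suWperm sg (sp n) l i t)) ω))
        - (∑ᶠ l : ℕ, (ρ (stopProc Y (suVperm sg (sp n) l i t'')) ω
          - ρ (stopProc Y (suWperm sg (sp n) l i t'')) ω))) atTop
      (fun ω => if i = c then
          ρ (stopProc Y (fun j => if j = c then t else uK)) ω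
            - ρ (stopProc Y (fun j => if j = c then t'' else uK)) ω
        else 0) := by
    refine tendstoInMeasure_of_eventually_eq ?_
    obtain ⟨N, hN⟩ := hmesh (t'' - uK) (by linarith)
    filter_upwards [eventually_ge_atTop N] with n hn
    funext ω
    exact su_sum_diff_eq Y ρ sg c hconst huK h1 h2 h3 (sp n) (hsp0 n) (hspmono n) (hsptop n)
      (hN n hn) i ω
  exact tendstoInMeasure_unique' hA hB

end InvarianceCore

/-- Proposition 4.3, Invariance. Two ISU decomposition schemes, built
from possibly different increasing sequences of unbounded partitions with vanishing mesh
and possibly different update orders, coincide at `X` almost surely, provided both exist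
and are stable at `X` along a refining sequence of phased delays increasing to identity. -/
theorem isu_invariance_partition_and_update_order
    {Ω : Type*} [MeasurableSpace Ω] (μ : Measure Ω) [IsProbabilityMeasure μ]
    {m : ℕ} (hm : 1 ≤ m)
    (X : Fin m → Ω → ℝ → ℝ) (hX : ∀ i ω, CadlagOn (X i ω))
    (ρ : (Fin m → Ω → ℝ → ℝ) → Ω → ℝ)
    (𝒯 : Set (Fin m → ℝ → ℝ)) (h𝒯 : ∀ τ' ∈ 𝒯, IsDelay τ')
    (τ : ℕ → Fin m → ℝ → ℝ) (hτmem : ∀ n, τ n ∈ 𝒯)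
    (hτdelay : ∀ n, IsDelay (τ n))
    (hτphased : ∀ n, IsPhasedDelay (τ n))
    (hτref : IsRefiningToIdentity τ)
    -- the two partition sequences Π and Π̃
    (s s' : ℕ → ℕ → ℝ)
    (hs0 : ∀ n, s n 0 = 0) (hsmono : ∀ n, StrictMono (s n))
    (hsunbdd : ∀ n, Tendsto (s n) atTop atTop)
    (hincr : ∀ n, Set.range (s n) ⊆ Set.range (s (n + 1)))
    (hmesh : ∀ ε > (0 : ℝ), ∃ N, ∀ n ≥ N, ∀ k, s n (k + 1) - s n k < ε)
    (hs'0 : ∀ n, s' n 0 = 0) (hs'mono : ∀ n, StrictMono (s' n))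
    (hs'unbdd : ∀ n, Tendsto (s' n) atTop atTop)
    (hincr' : ∀ n, Set.range (s' n) ⊆ Set.range (s' (n + 1)))
    (hmesh' : ∀ ε > (0 : ℝ), ∃ N, ∀ n ≥ N, ∀ k, s' n (k + 1) - s' n k < ε)
    -- the update order of the second scheme
    (σ : Equiv.Perm (Fin m))
    -- the ISU decomposition scheme with respect to Π in the natural update order …
    (δISU : (Fin m → Ω → ℝ → ℝ) → Fin m → ℝ → Ω → ℝ)
    (hISU0 : ∀ Y ∈ insert X {Y | ∃ τ' ∈ 𝒯, Y = delayed X τ'},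
      ∀ (i : Fin m) ω, δISU Y i 0 ω = 0)
    (hISUcadlag : ∀ Y ∈ insert X {Y | ∃ τ' ∈ 𝒯, Y = delayed X τ'},
      ∀ (i : Fin m) ω, CadlagOn (fun t => δISU Y i t ω))
    (hISUlim : ∀ Y ∈ insert X {Y | ∃ τ' ∈ 𝒯, Y = delayed X τ'},
      ∀ (i : Fin m) (t : ℝ), 0 ≤ t →
        TendstoInMeasure μ
          (fun n ω => ∑ᶠ l : ℕ,
            (ρ (stopProc Y (suVperm (Equiv.refl (Fin m)) (s n) l i t)) ω -
              ρ (stopProc Y (suWperm (Equiv.refl (Fin m)) (s n) l i t)) ω))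
          atTop (δISU Y i t))
    (hISUstab : StableAt μ X τ δISU)
    -- … and the ISU decomposition scheme with respect to Π̃ in the update order σ
    (δISU' : (Fin m → Ω → ℝ → ℝ) → Fin m → ℝ → Ω → ℝ)
    (hISU'0 : ∀ Y ∈ insert X {Y | ∃ τ' ∈ 𝒯, Y = delayed X τ'},
      ∀ (i : Fin m) ω, δISU' Y i 0 ω = 0)
    (hISU'cadlag : ∀ Y ∈ insert X {Y | ∃ τ' ∈ 𝒯, Y = delayed X τ'},
      ∀ (i : Fin m) ω, CadlagOn (fun t => δISU' Y i t ω))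
    (hISU'lim : ∀ Y ∈ insert X {Y | ∃ τ' ∈ 𝒯, Y = delayed X τ'},
      ∀ (i : Fin m) (t : ℝ), 0 ≤ t →
        TendstoInMeasure μ
          (fun n ω => ∑ᶠ l : ℕ,
            (ρ (stopProc Y (suVperm σ (s' n) l i t)) ω -
              ρ (stopProc Y (suWperm σ (s' n) l i t)) ω))
          atTop (δISU' Y i t))
    (hISU'stab : StableAt μ X τ δISU') :
    ∀ᵐ ω ∂μ, ∀ (i : Fin m) (t : ℝ), 0 ≤ t → δISU X i t ω = δISU' X i t ω := by
    classical
  have hXmem : X ∈ insert X {Y | ∃ τ' ∈ 𝒯, Y = delayed X τ'} := Set.mem_insert _ _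
  have hYmem : ∀ N : ℕ, delayed X (τ N) ∈ insert X {Y | ∃ τ' ∈ 𝒯, Y = delayed X τ'} :=
    fun N => Set.mem_insert_iff.2 (Or.inr ⟨τ N, hτmem N, rfl⟩)
  -- Step A: for every phased delay, the two ISU decompositions of the delayed process agree.
  have stepA : ∀ N : ℕ, ∀ᵐ ω ∂μ, ∀ (i : Fin m) (t : ℝ), 0 ≤ t →
      δISU (delayed X (τ N)) i t ω = δISU' (delayed X (τ N)) i t ω := by
    intro N
    obtain ⟨u, hu0, humono, hutop, huph⟩ := hτphased N
    choose c hc using huph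
    have huK0 : ∀ K : ℕ, 0 ≤ u K := by
      intro K
      rw [← hu0]
      exact humono.monotone (Nat.zero_le K)
    have hτconst : ∀ K : ℕ, ∀ j, j ≠ c K → ∀ p ∈ Icc (u K) (u (K + 1)),
        τ N j p = τ N j (u (K + 1)) := by
      intro K j hj p hp
      have hKlt : u K < u (K + 1) := humono (Nat.lt_succ_self K)
      have hend : u (K + 1) ∈ Ioc (u K) (u (K + 1)) := ⟨hKlt, le_rfl⟩
      rcases eq_or_lt_of_le hp.1 with he | hlt
      · rw [← he]
        have hrc : Tendsto (τ N j) (𝓝[>] (u K)) (𝓝 (τ N j (u K))) :=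
          ((hτdelay N j).2.2.1 (u K) (huK0 K)).mono_left
            (nhdsWithin_mono _ Ioi_subset_Ici_self)
        have hev : (τ N j) =ᶠ[𝓝[>] (u K)] (fun _ => τ N j (u (K + 1))) := by
          filter_upwards [Ioo_mem_nhdsGT_of_mem
            (⟨le_rfl, hKlt⟩ : u K ∈ Ico (u K) (u (K + 1)))] with x hx
          exact hc K j hj x ⟨hx.1, hx.2.le⟩ (u (K + 1)) hend
        exact tendsto_nhds_unique (Filter.Tendsto.congr' hev hrc) tendsto_const_nhds
      · exact hc K j hj p ⟨hlt, hp.2⟩ (u (K + 1)) hend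
    have hconst : ∀ K : ℕ, ∀ j, j ≠ c K → ∀ ω, ∀ p ∈ Icc (u K) (u (K + 1)),
        ∀ q ∈ Icc (u K) (u (K + 1)), delayed X (τ N) j ω p = delayed X (τ N) j ω q := by
      intro K j hj ω p hp q hq
      show X j ω (τ N j p) = X j ω (τ N j q)
      rw [hτconst K j hj p hp, hτconst K j hj q hq]
    have hinc : ∀ (i : Fin m) (K : ℕ) (t'' t : ℝ), u K < t'' → t'' ≤ t → t ≤ u (K + 1) →
        ∀ᵐ ω ∂μ, δISU (delayed X (τ N)) i t ω - δISU (delayed X (τ N)) i t'' ω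
          = δISU' (delayed X (τ N)) i t ω - δISU' (delayed X (τ N)) i t'' ω := by
      intro i K t'' t hA hB hC
      have e1 := isu_increment_ae (delayed X (τ N)) ρ (Equiv.refl (Fin m)) s hs0 hsmono
        hsunbdd hmesh (δISU (delayed X (τ N))) (hISUlim _ (hYmem N)) (c K)
        (hconst K) (huK0 K) hA hB hC i
      have e2 := isu_increment_ae (delayed X (τ N)) ρ σ s' hs'0 hs'mono
        hs'unbdd hmesh' (δISU' (delayed X (τ N))) (hISU'lim _ (hYmem N)) (c K)
        (hconst K) (huK0 K) hA hB hC i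
      filter_upwards [e1, e2] with ω hω1 hω2
      exact hω1.trans hω2.symm
    have hae1 : ∀ᵐ ω ∂μ, ∀ (i : Fin m) (K : ℕ) (q₁ q₂ : ℚ), u K < (q₁ : ℝ) →
        (q₁ : ℝ) ≤ (q₂ : ℝ) → (q₂ : ℝ) ≤ u (K + 1) →
        δISU (delayed X (τ N)) i q₂ ω - δISU (delayed X (τ N)) i q₁ ω
          = δISU' (delayed X (τ N)) i q₂ ω - δISU' (delayed X (τ N)) i q₁ ω := by
      rw [MeasureTheory.ae_all_iff]; intro i
      rw [MeasureTheory.ae_all_iff]; intro K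
      rw [MeasureTheory.ae_all_iff]; intro q₁
      rw [MeasureTheory.ae_all_iff]; intro q₂
      by_cases hA : u K < (q₁ : ℝ)
      · by_cases hB : (q₁ : ℝ) ≤ (q₂ : ℝ)
        · by_cases hC : (q₂ : ℝ) ≤ u (K + 1)
          · filter_upwards [hinc i K q₁ q₂ hA hB hC] with ω h
            exact fun _ _ _ => h
          · filter_upwards with ω _ _ hC'
            exact absurd hC' hC
        · filter_upwards with ω _ hB'
          exact absurd hB' hB
      · filter_upwards with ω hA'
        exact absurd hA' hA
    have hae2 : ∀ᵐ ω ∂μ, ∀ (i : Fin m) (K : ℕ) (q₁ : ℚ), u K < (q₁ : ℝ) →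
        (q₁ : ℝ) ≤ u (K + 1) →
        δISU (delayed X (τ N)) i (u (K + 1)) ω - δISU (delayed X (τ N)) i q₁ ω
          = δISU' (delayed X (τ N)) i (u (K + 1)) ω - δISU' (delayed X (τ N)) i q₁ ω := by
      rw [MeasureTheory.ae_all_iff]; intro i
      rw [MeasureTheory.ae_all_iff]; intro K
      rw [MeasureTheory.ae_all_iff]; intro q₁
      by_cases hA : u K < (q₁ : ℝ)
      · by_cases hB : (q₁ : ℝ) ≤ u (K + 1)
        · filter_upwards [hinc i K q₁ (u (K + 1)) hA hB le_rfl] with ω h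
          exact fun _ _ => h
        · filter_upwards with ω _ hB'
          exact absurd hB' hB
      · filter_upwards with ω hA'
        exact absurd hA' hA
    filter_upwards [hae1, hae2] with ω hω1 hω2
    intro i t ht
    have hg0 : δISU (delayed X (τ N)) i 0 ω - δISU' (delayed X (τ N)) i 0 ω = 0 := by
      rw [hISU0 _ (hYmem N) i ω, hISU'0 _ (hYmem N) i ω, sub_zero]
    set g : ℝ → ℝ :=
      fun r => δISU (delayed X (τ N)) i r ω - δISU' (delayed X (τ N)) i r ω with hgdef
    have hgrc : ∀ r : ℝ, 0 ≤ r → ContinuousWithinAt g (Ici r) r := fun r hr =>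
      ((hISUcadlag _ (hYmem N) i ω).1 r hr).sub ((hISU'cadlag _ (hYmem N) i ω).1 r hr)
    have hpair1 : ∀ (K : ℕ) (q₁ q₂ : ℚ), u K < (q₁ : ℝ) → (q₁ : ℝ) ≤ (q₂ : ℝ) →
        (q₂ : ℝ) ≤ u (K + 1) → g q₂ = g q₁ := by
      intro K q₁ q₂ hA hB hC
      have h := hω1 i K q₁ q₂ hA hB hC
      simp only [hgdef]
      linarith
    have hpair2 : ∀ (K : ℕ) (q₁ : ℚ), u K < (q₁ : ℝ) → (q₁ : ℝ) ≤ u (K + 1) →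
        g (u (K + 1)) = g q₁ := by
      intro K q₁ hA hB
      have h := hω2 i K q₁ hA hB
      simp only [hgdef]
      linarith
    have key : ∀ K : ℕ, ∀ r : ℝ, 0 ≤ r → r ≤ u K → g r = 0 := by
      intro K
      induction K with
      | zero =>
        intro r h1 h2
        rw [hu0] at h2
        rw [show r = (0 : ℝ) from le_antisymm h2 h1]
        exact hg0
      | succ K ih =>
        have hgK : g (u K) = 0 := ih (u K) (huK0 K) le_rfl
        have hqz : ∀ q : ℚ, u K < (q : ℝ) → (q : ℝ) ≤ u (K + 1) → g q = 0 := by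
          intro q hq1 hq2
          by_contra hne
          obtain ⟨η, hη, hball⟩ := Metric.continuousWithinAt_iff.1 (hgrc (u K) (huK0 K))
            |g q| (abs_pos.2 hne)
          obtain ⟨v, hv1, hv2⟩ := exists_rat_btwn
            (show u K < min (u K + η) (q : ℝ) from lt_min (by linarith) hq1)
          have hvq : (v : ℝ) ≤ (q : ℝ) := (lt_of_lt_of_le hv2 (min_le_right _ _)).le
          have hgv : g v = g q := (hpair1 K v q hv1 hvq hq2).symm
          have hdd : dist (v : ℝ) (u K) < η := by
            rw [Real.dist_eq, abs_of_nonneg (by linarith)]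
            have := lt_of_lt_of_le hv2 (min_le_left _ _)
            linarith
          have hlt := hball (Set.mem_Ici.2 hv1.le) hdd
          rw [Real.dist_eq, hgK, sub_zero, hgv] at hlt
          exact absurd hlt (lt_irrefl _)
        intro r hr0 hr1
        rcases le_or_gt r (u K) with h | h
        · exact ih r hr0 h
        · rcases eq_or_lt_of_le hr1 with he | hlt
          · obtain ⟨v, hv1, hv2⟩ := exists_rat_btwn (humono (Nat.lt_succ_self K))
            rw [he, hpair2 K v hv1 hv2.le]
            exact hqz v hv1 hv2.le
          · by_contra hne
            obtain ⟨η, hη, hball⟩ := Metric.continuousWithinAt_iff.1 (hgrc r hr0)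
              |g r| (abs_pos.2 hne)
            obtain ⟨v, hv1, hv2⟩ := exists_rat_btwn
              (show r < min (r + η) (u (K + 1)) from lt_min (by linarith) hlt)
            have hvK : u K < (v : ℝ) := h.trans hv1
            have hvU : (v : ℝ) ≤ u (K + 1) := (lt_of_lt_of_le hv2 (min_le_right _ _)).le
            have hgv : g v = 0 := hqz v hvK hvU
            have hdd : dist (v : ℝ) r < η := by
              rw [Real.dist_eq, abs_of_nonneg (by linarith)]
              have := lt_of_lt_of_le hv2 (min_le_left _ _)
              linarith
            have hlt2 := hball (Set.mem_Ici.2 hv1.le) hdd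
            rw [Real.dist_eq, hgv, zero_sub, abs_neg] at hlt2
            exact absurd hlt2 (lt_irrefl _)
    obtain ⟨K, hK⟩ := (hutop.eventually_ge_atTop t).exists
    exact sub_eq_zero.1 (key K t ht hK)
  -- Step B: the left limits of the two decompositions of X agree a.e.
  have stepB : ∀ (i : Fin m) (q : ℝ), 0 < q →
      (fun ω => Function.leftLim (fun r => δISU X i r ω) q) =ᵐ[μ]
        (fun ω => Function.leftLim (fun r => δISU' X i r ω) q) := by
    intro i q hq
    refine tendstoInMeasure_unique' ?_ (hISU'stab i q hq)
    refine TendstoInMeasure.congr (fun n => ?_) EventuallyEq.rfl (hISUstab i q hq)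
    filter_upwards [stepA n] with ω hω
    obtain ⟨L, hL⟩ := (hISUcadlag _ (hYmem n) i ω).2 q hq
    have hnb : (𝓝[<] q) ≠ ⊥ := (nhdsLT_neBot q).ne
    have h2 : Tendsto (fun r => δISU' (delayed X (τ n)) i r ω) (𝓝[<] q) (𝓝 L) := by
      refine Filter.Tendsto.congr' ?_ hL
      filter_upwards [Ioo_mem_nhdsLT_of_mem (⟨hq, le_rfl⟩ : q ∈ Ioc 0 q)] with r hr
      exact hω i r hr.1.le
    rw [leftLim_eq_of_tendsto hL, leftLim_eq_of_tendsto h2]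
  have hqae : ∀ᵐ ω ∂μ, ∀ (i : Fin m) (q : ℚ), 0 < (q : ℝ) →
      Function.leftLim (fun r => δISU X i r ω) q
        = Function.leftLim (fun r => δISU' X i r ω) q := by
    rw [MeasureTheory.ae_all_iff]; intro i
    rw [MeasureTheory.ae_all_iff]; intro q
    by_cases hq : 0 < (q : ℝ)
    · filter_upwards [stepB i q hq] with ω h
      exact fun _ => h
    · filter_upwards with ω hq'
      exact absurd hq' hq
  -- Final step: right-continuity recovers values from rational left limits.
  filter_upwards [hqae] with ω hω i t ht
  by_contra hne
  have hd : 0 < |δISU X i t ω - δISU' X i t ω| := abs_pos.2 (sub_ne_zero.2 hne)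
  set ε : ℝ := |δISU X i t ω - δISU' X i t ω| / 3 with hεdef
  have hε0 : 0 < ε := by positivity
  obtain ⟨η₁, hη₁, hb1⟩ :=
    Metric.continuousWithinAt_iff.1 ((hISUcadlag X hXmem i ω).1 t ht) ε hε0
  obtain ⟨η₂, hη₂, hb2⟩ :=
    Metric.continuousWithinAt_iff.1 ((hISU'cadlag X hXmem i ω).1 t ht) ε hε0
  obtain ⟨q, hq1, hq2⟩ := exists_rat_btwn (lt_add_of_pos_right t (lt_min hη₁ hη₂))
  have hq0 : 0 < (q : ℝ) := lt_of_le_of_lt ht hq1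
  have hll : ∀ (F : ℝ → ℝ) (η : ℝ), CadlagOn F →
      (∀ ⦃v : ℝ⦄, v ∈ Ici t → dist v t < η → dist (F v) (F t) < ε) → (q : ℝ) < t + η →
      |Function.leftLim F q - F t| ≤ ε := by
    intro F η hcad hball hqη
    obtain ⟨L, hL⟩ := hcad.2 q hq0
    have hnb : (𝓝[<] (q : ℝ)) ≠ ⊥ := (nhdsLT_neBot _).ne
    rw [leftLim_eq_of_tendsto hL]
    have hev : ∀ᶠ v in 𝓝[<] (q : ℝ), dist (F v) (F t) ≤ ε := by
      filter_upwards [Ioo_mem_nhdsLT_of_mem (⟨hq1, le_rfl⟩ : (q : ℝ) ∈ Ioc t q)] with v hv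
      refine (hball (Set.mem_Ici.2 hv.1.le) ?_).le
      rw [Real.dist_eq, abs_of_nonneg (by linarith [hv.1])]
      linarith [hv.2]
    have htd : Tendsto (fun v => dist (F v) (F t)) (𝓝[<] (q : ℝ)) (𝓝 (dist L (F t))) :=
      hL.dist tendsto_const_nhds
    have hfin := le_of_tendsto htd hev
    rwa [Real.dist_eq] at hfin
  have e1 : |Function.leftLim (fun r => δISU X i r ω) q - δISU X i t ω| ≤ ε :=
    hll (fun r => δISU X i r ω) η₁ (hISUcadlag X hXmem i ω)
      (fun v hv hdd => hb1 hv hdd) (hq2.trans_le (by linarith [min_le_left η₁ η₂]))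
  have e2 : |Function.leftLim (fun r => δISU' X i r ω) q - δISU' X i t ω| ≤ ε :=
    hll (fun r => δISU' X i r ω) η₂ (hISU'cadlag X hXmem i ω)
      (fun v hv hdd => hb2 hv hdd) (hq2.trans_le (by linarith [min_le_right η₁ η₂]))
  have heq := hω i q hq0
  have htri : |δISU X i t ω - δISU' X i t ω| ≤ ε + ε := by
    calc |δISU X i t ω - δISU' X i t ω|
        = |(δISU X i t ω - Function.leftLim (fun r => δISU X i r ω) q)
            + (Function.leftLim (fun r => δISU X i r ω) q - δISU' X i t ω)| := by
          congr 1
          ring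
      _ ≤ |δISU X i t ω - Function.leftLim (fun r => δISU X i r ω) q|
            + |Function.leftLim (fun r => δISU X i r ω) q - δISU' X i t ω| := abs_add_le _ _
      _ = |δISU X i t ω - Function.leftLim (fun r => δISU X i r ω) q|
            + |Function.leftLim (fun r => δISU' X i r ω) q - δISU' X i t ω| := by rw [heq]
      _ ≤ ε + ε := add_le_add (by rw [abs_sub_comm]; exact e1) e2
  rw [hεdef] at htri
  linarith
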